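/- arXiv:1904.07031 — 7 statements merged into one kernel-verified Lean document; each statement's English description precedes it below -/
import Mathlib

section
/- Let G be a metrizable topological group and let X be a metrizable topological space, and let μ : G × X → X be a continuous action of G on X. Then the action μ is proper if and only if for every sequence (g_n) in G and every convergent sequence (x_n) in X such that the sequence (g_n • x_n) converges in X, the sequence (g_n) admits a convergent subsequence. -/
open Filter Topology

/-- A continuous action of a topological group `G` on a topological space `X` is *proper*
if the map `(g, x) ↦ (g • x, x)` is a proper map, i.e. the preimage of every compact
subset of `X × X` is a compact subset of `G × X`. -/
def IsProperAction (G X : Type*) [SMul G X] [TopologicalSpace G] [TopologicalSpace X] : Prop :=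
  ∀ K : Set (X × X), IsCompact K →
    IsCompact ((fun gx : G × X => (gx.1 • gx.2, gx.2)) ⁻¹' K)

/-- For a metrizable topological group `G` acting continuously on a
metrizable space `X`, the action is proper if and only if for every sequence `gₙ` in `G`
and every convergent sequence `xₙ` in `X` such that `gₙ • xₙ` converges in `X`, the
sequence `gₙ` admits a convergent subsequence. -/
theorem properAction_iff_subsequence_of_metrizable
    (G X : Type*) [Group G] [TopologicalSpace G] [IsTopologicalGroup G]
    [TopologicalSpace.MetrizableSpace G]
    [TopologicalSpace X] [TopologicalSpace.MetrizableSpace X]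
    [MulAction G X] [ContinuousSMul G X] :
    IsProperAction G X ↔
      ∀ (g : ℕ → G) (x : ℕ → X) (x₀ : X),
        Tendsto x atTop (𝓝 x₀) →
        (∃ y : X, Tendsto (fun n => g n • x n) atTop (𝓝 y)) →
        ∃ φ : ℕ → ℕ, StrictMono φ ∧ ∃ g₀ : G, Tendsto (g ∘ φ) atTop (𝓝 g₀) := by
  letI : MetricSpace G := TopologicalSpace.metrizableSpaceMetric G
  letI : MetricSpace X := TopologicalSpace.metrizableSpaceMetric X
  constructor
  · rintro hproper g x x₀ hx ⟨y, hy⟩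
    have hK : IsCompact (insert (y, x₀) (Set.range fun n => (g n • x n, x n))) :=
      (hy.prodMk_nhds hx).isCompact_insert_range
    have hS := hproper _ hK
    have hmem : ∀ n, (g n, x n) ∈
        ((fun gx : G × X => (gx.1 • gx.2, gx.2)) ⁻¹' insert (y, x₀)
          (Set.range fun n => (g n • x n, x n))) := fun n =>
      Set.mem_insert_iff.mpr (Or.inr ⟨n, rfl⟩)
    obtain ⟨p, _, φ, hφ, hconv⟩ := hS.isSeqCompact hmem
    exact ⟨φ, hφ, p.1, (continuous_fst.tendsto p).comp hconv⟩
  · intro h K hK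
    apply IsSeqCompact.isCompact
    intro u hu
    obtain ⟨p, hpK, φ, hφ, hconv⟩ :=
      hK.isSeqCompact (x := fun n => ((u n).1 • (u n).2, (u n).2)) hu
    have hx : Tendsto (fun n => (u (φ n)).2) atTop (𝓝 p.2) :=
      (continuous_snd.tendsto p).comp hconv
    have hgx : Tendsto (fun n => (u (φ n)).1 • (u (φ n)).2) atTop (𝓝 p.1) :=
      (continuous_fst.tendsto p).comp hconv
    obtain ⟨ψ, hψ, g₀, hg₀⟩ := h (fun n => (u (φ n)).1) (fun n => (u (φ n)).2) p.2 hx ⟨p.1, hgx⟩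
    have hx' : Tendsto (fun n => (u (φ (ψ n))).2) atTop (𝓝 p.2) := hx.comp hψ.tendsto_atTop
    have hgx' : Tendsto (fun n => (u (φ (ψ n))).1 • (u (φ (ψ n))).2) atTop (𝓝 p.1) :=
      hgx.comp hψ.tendsto_atTop
    have hsmul : Tendsto (fun n => (u (φ (ψ n))).1 • (u (φ (ψ n))).2) atTop (𝓝 (g₀ • p.2)) :=
      hg₀.smul hx'
    have hpy : g₀ • p.2 = p.1 := tendsto_nhds_unique hsmul hgx'
    refine ⟨(g₀, p.2), ?_, φ ∘ ψ, hφ.comp hψ, ?_⟩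
    · show (g₀ • p.2, p.2) ∈ K
      rw [hpy]
      exact hpK
    · have : Tendsto (fun n => ((u (φ (ψ n))).1, (u (φ (ψ n))).2)) atTop (𝓝 (g₀, p.2)) :=
        hg₀.prodMk_nhds hx'
      exact this
end

section
/- Let G be a topological group whose topology is induced by a complete left-invariant metric, and let X be a metric space on which G acts continuously by isometries (i.e., d(g • x, g • y) = d(x, y) for all g ∈ G and x, y ∈ X). Then the action is proper if and only if for every point x₀ ∈ X and every sequence (g_n) in G such that the sequence (g_n • x₀) converges to x₀ in X, the sequence (g_n) admits a convergent subsequence. -/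
open Filter Topology

/-- Key lemma: under the subsequence hypothesis at every point, any sequence `gₙ` such that
`gₙ • x` converges (to any point `y`) has a convergent subsequence. -/
theorem aux_subseq_of_orbit_tendsto
    {G X : Type*} [Group G] [MetricSpace G] [IsTopologicalGroup G] [CompleteSpace G]
    (hinv : ∀ h g₁ g₂ : G, dist (h * g₁) (h * g₂) = dist g₁ g₂)
    [MetricSpace X] [MulAction G X] [ContinuousSMul G X]
    (hiso : ∀ (g : G) (x y : X), dist (g • x) (g • y) = dist x y)
    (H : ∀ (x₀ : X) (g : ℕ → G),
        Tendsto (fun n => g n • x₀) atTop (𝓝 x₀) →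
        ∃ φ : ℕ → ℕ, StrictMono φ ∧ ∃ g₀ : G, Tendsto (g ∘ φ) atTop (𝓝 g₀))
    (x y : X) (g : ℕ → G)
    (hg : Tendsto (fun n => g n • x) atTop (𝓝 y)) :
    ∃ φ : ℕ → ℕ, StrictMono φ ∧ ∃ g₀ : G, Tendsto (g ∘ φ) atTop (𝓝 g₀) := by
  set S : Set G := {u : G | u • x = x} with hS
  have hSclosed : IsClosed S :=
    isClosed_eq (continuous_id.smul continuous_const) continuous_const
  have hSseq : IsSeqCompact S := by
    intro u hu
    obtain ⟨φ, hφ, g₀, hg₀⟩ := H x u (by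
      have : (fun n => u n • x) = fun _ => x := funext fun n => hu n
      rw [this]; exact tendsto_const_nhds)
    exact ⟨g₀, hSclosed.mem_of_tendsto hg₀ (Eventually.of_forall fun n => hu (φ n)), φ, hφ, hg₀⟩
  have hScomp : IsCompact S := hSseq.isCompact
  -- Step 2: points moving `x` little are close to the stabilizer `S`.
  have key : ∀ ε > 0, ∃ δ > 0, ∀ u : G, dist (u • x) x < δ → ∃ s ∈ S, dist u s < ε := by
    intro ε hε
    by_contra hcon
    push_neg at hcon
    choose u hu1 hu2 using fun n : ℕ => hcon (1 / (n + 1)) (by positivity)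
    have hux : Tendsto (fun n => u n • x) atTop (𝓝 x) := by
      rw [tendsto_iff_dist_tendsto_zero]
      refine squeeze_zero (fun n => dist_nonneg) (fun n => (hu1 n).le) ?_
      exact tendsto_one_div_add_atTop_nhds_zero_nat
    obtain ⟨φ, hφ, g₀, hg₀⟩ := H x u hux
    have hg₀S : g₀ ∈ S := by
      have h1 : Tendsto (fun n => (u ∘ φ) n • x) atTop (𝓝 (g₀ • x)) :=
        hg₀.smul tendsto_const_nhds
      have h2 : Tendsto (fun n => (u ∘ φ) n • x) atTop (𝓝 x) :=
        hux.comp hφ.tendsto_atTop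
      exact tendsto_nhds_unique h1 h2
    have : ε ≤ dist ((u ∘ φ) 0) g₀ := hu2 (φ 0) g₀ hg₀S
    have hlt : ∀ n, ε ≤ dist ((u ∘ φ) n) g₀ := fun n => hu2 (φ n) g₀ hg₀S
    have hdist0 : Tendsto (fun n => dist ((u ∘ φ) n) g₀) atTop (𝓝 0) :=
      tendsto_iff_dist_tendsto_zero.1 hg₀
    have : ε ≤ 0 := le_of_tendsto_of_tendsto tendsto_const_nhds hdist0
      (Eventually.of_forall hlt)
    linarith
  -- Step 3: the range of `g` is totally bounded.
  have htb : TotallyBounded (Set.range g) := by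
    rw [Metric.totallyBounded_iff]
    intro ε hε
    obtain ⟨δ, hδ, hkey⟩ := key (ε / 2) (by positivity)
    obtain ⟨N, hN⟩ := (Metric.tendsto_atTop.1 hg) (δ / 2) (by positivity)
    -- the compact set `g N • S`
    have hC : IsCompact ((fun s => g N * s) '' S) :=
      hScomp.image (continuous_mul_left (g N))
    obtain ⟨t, ht, htcov⟩ := Metric.totallyBounded_iff.1 hC.totallyBounded (ε / 2) (by positivity)
    refine ⟨t ∪ (g '' {i | i < N}), ht.union ((Set.finite_Iio N).image g), ?_⟩
    rintro - ⟨n, rfl⟩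
    rcases lt_or_ge n N with hn | hn
    · exact Set.mem_biUnion (Set.mem_union_right _ ⟨n, hn, rfl⟩) (Metric.mem_ball_self hε)
    · -- `n ≥ N` : `g n` is `ε/2`-close to `g N * s` for some `s ∈ S`
      have hd : dist (((g N)⁻¹ * g n) • x) x < δ := by
        have : dist (((g N)⁻¹ * g n) • x) x = dist (g n • x) (g N • x) := by
          calc dist (((g N)⁻¹ * g n) • x) x
              = dist (g N • (((g N)⁻¹ * g n) • x)) (g N • x) := (hiso _ _ _).symm
            _ = dist (g n • x) (g N • x) := by rw [smul_smul, mul_inv_cancel_left]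
        rw [this]
        calc dist (g n • x) (g N • x) ≤ dist (g n • x) y + dist y (g N • x) := dist_triangle _ _ _
          _ < δ / 2 + δ / 2 := by
              have h1 := hN n hn
              have h2 := hN N le_rfl
              rw [dist_comm y]
              exact add_lt_add h1 h2
          _ = δ := by ring
      obtain ⟨s, hsS, hsd⟩ := hkey _ hd
      have hclose : dist (g n) (g N * s) < ε / 2 := by
        have : dist (g n) (g N * s) = dist ((g N)⁻¹ * g n) s := by
          conv_lhs => rw [← mul_inv_cancel_left (g N) (g n)]
          exact hinv _ _ _
        rwa [this]
      have hmem : g N * s ∈ (fun s => g N * s) '' S := ⟨s, hsS, rfl⟩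
      obtain ⟨c, hct, hc⟩ := Set.mem_iUnion₂.1 (htcov hmem)
      refine Set.mem_biUnion (Set.mem_union_left _ hct) ?_
      rw [Metric.mem_ball] at hc ⊢
      calc dist (g n) c ≤ dist (g n) (g N * s) + dist (g N * s) c := dist_triangle _ _ _
        _ < ε / 2 + ε / 2 := add_lt_add hclose hc
        _ = ε := by ring
  -- conclude by compactness of the closure of the range
  have hcomp : IsCompact (closure (Set.range g)) :=
    TotallyBounded.isCompact_of_isClosed htb.closure isClosed_closure
  obtain ⟨g₀, _, φ, hφ, hlim⟩ :=
    hcomp.tendsto_subseq (x := g) fun n => subset_closure ⟨n, rfl⟩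
  exact ⟨φ, hφ, g₀, hlim⟩

/-- Let `G` be a topological group whose topology is induced by a complete
left-invariant metric, acting continuously by isometries on a metric space `X`.  Then the
action is proper if and only if for every point `x₀ ∈ X` and every sequence `gₙ` in `G` such
that `gₙ • x₀` converges to `x₀`, the sequence `gₙ` admits a convergent subsequence. -/
theorem properAction_iff_subsequence_at_fixed_point
    (G X : Type*) [Group G] [MetricSpace G] [IsTopologicalGroup G] [CompleteSpace G]
    (hinv : ∀ h g₁ g₂ : G, dist (h * g₁) (h * g₂) = dist g₁ g₂)
    [MetricSpace X] [MulAction G X] [ContinuousSMul G X]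
    (hiso : ∀ (g : G) (x y : X), dist (g • x) (g • y) = dist x y) :
    IsProperAction G X ↔
      ∀ (x₀ : X) (g : ℕ → G),
        Tendsto (fun n => g n • x₀) atTop (𝓝 x₀) →
        ∃ φ : ℕ → ℕ, StrictMono φ ∧ ∃ g₀ : G, Tendsto (g ∘ φ) atTop (𝓝 g₀) := by
  constructor
  · -- proper ⇒ subsequence condition
    intro hp x₀ g hg
    have hK : IsCompact (insert ((x₀ : X), x₀) (Set.range fun n => (g n • x₀, x₀))) :=
      (hg.prodMk_nhds tendsto_const_nhds).isCompact_insert_range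
    have hP := hp _ hK
    have hmem : ∀ n, ((g n, x₀) : G × X) ∈
        ((fun gx : G × X => (gx.1 • gx.2, gx.2)) ⁻¹'
          insert ((x₀ : X), x₀) (Set.range fun n => (g n • x₀, x₀))) :=
      fun n => Set.mem_preimage.2 (Set.mem_insert_iff.2 (Or.inr ⟨n, rfl⟩))
    obtain ⟨p, _, φ, hφ, hlim⟩ := hP.tendsto_subseq hmem
    exact ⟨φ, hφ, p.1, (continuous_fst.tendsto p).comp hlim⟩
  · -- subsequence condition ⇒ proper
    intro H K hK
    rw [isCompact_iff_isSeqCompact]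
    intro p hp
    -- extract a converging subsequence of the image sequence in `K`
    obtain ⟨⟨y, x⟩, hyx, φ₁, hφ₁, hq⟩ :=
      hK.tendsto_subseq (x := fun n => ((p n).1 • (p n).2, (p n).2)) hp
    set g : ℕ → G := fun n => (p (φ₁ n)).1 with hgdef
    set xs : ℕ → X := fun n => (p (φ₁ n)).2 with hxsdef
    have hgx : Tendsto (fun n => g n • xs n) atTop (𝓝 y) :=
      (continuous_fst.tendsto _).comp hq
    have hxs : Tendsto xs atTop (𝓝 x) :=
      (continuous_snd.tendsto _).comp hq
    have horbit : Tendsto (fun n => g n • x) atTop (𝓝 y) := by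
      rw [tendsto_iff_dist_tendsto_zero]
      have hb : ∀ n, dist (g n • x) y ≤ dist x (xs n) + dist (g n • xs n) y := fun n =>
        calc dist (g n • x) y ≤ dist (g n • x) (g n • xs n) + dist (g n • xs n) y :=
              dist_triangle _ _ _
          _ = dist x (xs n) + dist (g n • xs n) y := by rw [hiso]
      refine squeeze_zero (fun n => dist_nonneg) hb ?_
      have h1 : Tendsto (fun n => dist x (xs n)) atTop (𝓝 0) := by
        have := tendsto_iff_dist_tendsto_zero.1 hxs
        simpa [dist_comm] using this
      have h2 : Tendsto (fun n => dist (g n • xs n) y) atTop (𝓝 0) :=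
        tendsto_iff_dist_tendsto_zero.1 hgx
      simpa using h1.add h2
    obtain ⟨φ₂, hφ₂, g₀, hg₀⟩ :=
      aux_subseq_of_orbit_tendsto hinv hiso H x y g horbit
    refine ⟨(g₀, x), ?_, φ₁ ∘ φ₂, hφ₁.comp hφ₂, ?_⟩
    · -- `(g₀, x)` belongs to the preimage
      have h1 : Tendsto (fun n => g (φ₂ n) • x) atTop (𝓝 (g₀ • x)) :=
        hg₀.smul tendsto_const_nhds
      have h2 : Tendsto (fun n => g (φ₂ n) • x) atTop (𝓝 y) :=
        horbit.comp hφ₂.tendsto_atTop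
      have : g₀ • x = y := tendsto_nhds_unique h1 h2
      simpa [Set.mem_preimage, this] using hyx
    · -- convergence of the subsequence of `p`
      have hfst : Tendsto (fun n => (p ((φ₁ ∘ φ₂) n)).1) atTop (𝓝 g₀) := hg₀
      have hsnd : Tendsto (fun n => (p ((φ₁ ∘ φ₂) n)).2) atTop (𝓝 x) :=
        hxs.comp hφ₂.tendsto_atTop
      have : Tendsto (fun n => ((p ((φ₁ ∘ φ₂) n)).1, (p ((φ₁ ∘ φ₂) n)).2)) atTop
          (𝓝 (g₀, x)) := hfst.prodMk_nhds hsnd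
      exact this
end

section
/- Let a topological group G act continuously on a topological space X, let p ∈ X, and let S ⊆ X be a subset containing p satisfying slice property (ii): if g ∈ G is such that (g • S) ∩ S ≠ ∅, then g ∈ G_p. Let ρ : G → G/G_p be the quotient map onto the coset space, let U ⊆ G/G_p, and let χ : U → G be a section of ρ (i.e., ρ(χ(u)) = u for all u ∈ U). Then the map F : U × S → X defined by F(u,s) = χ(u) • s is injective. -/
open Pointwise

/-- Let a topological group `G` act continuously on a topological space `X`,
let `p ∈ S ⊆ X` satisfy slice property (ii), let `U ⊆ G ⧸ G_p`, and let `χ : U → G` be a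
section of the quotient map `ρ : G → G ⧸ G_p`.  Then the map `F : U × S → X`,
`F(u, s) = χ(u) • s`, is injective. -/
theorem slice_map_injective
    (G X : Type*) [Group G] [TopologicalSpace G] [IsTopologicalGroup G]
    [TopologicalSpace X] [MulAction G X] [ContinuousSMul G X]
    (p : X) (S : Set X) (hpS : p ∈ S)
    (hii : ∀ g : G, (g • S ∩ S).Nonempty → g ∈ MulAction.stabilizer G p)
    (U : Set (G ⧸ MulAction.stabilizer G p)) (χ : U → G)
    (hsec : ∀ u : U, QuotientGroup.mk (χ u) = (u : G ⧸ MulAction.stabilizer G p)) :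
    Function.Injective (fun us : U × S => χ us.1 • (us.2 : X)) := by
  rintro ⟨u₁, s₁⟩ ⟨u₂, s₂⟩ h
  simp only at h
  have hg : ((χ u₂)⁻¹ * χ u₁) • (s₁ : X) = (s₂ : X) := by
    rw [mul_smul, h, inv_smul_smul]
  have hmem : (χ u₂)⁻¹ * χ u₁ ∈ MulAction.stabilizer G p := by
    apply hii
    exact ⟨(s₂ : X), ⟨s₁, s₁.2, hg⟩, s₂.2⟩
  have hu : u₁ = u₂ := by
    have : (u₁ : G ⧸ MulAction.stabilizer G p) = u₂ := by
      rw [← hsec u₁, ← hsec u₂, QuotientGroup.eq]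
      simpa using inv_mem hmem
    exact Subtype.ext this
  subst hu
  have hs : s₁ = s₂ := Subtype.ext (smul_left_cancel _ h)
  rw [hs]
end

section
/- Let a topological group G act continuously on a topological space X and let S ⊆ X be a slice through p ∈ X, with data U ⊆ G/G_p open containing the identity coset, χ : U → G a continuous section of the quotient map ρ : G → G/G_p, and F : U × S → X, F(u,s) = χ(u) • s, a homeomorphism onto an open neighborhood of p in X. Then the map φ : G × S → X defined by φ(g,s) = g • s is an open map onto its image G • S = {g • s : g ∈ G, s ∈ S} equipped with the subspace topology; that is, for every open subset W ⊆ G × S, φ(W) is open in G • S. -/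
open Pointwise Topology

/-- Let a topological group `G` act continuously on a topological space `X`
and let `S ⊆ X` be a slice through `p ∈ X`, with data: `U ⊆ G ⧸ G_p` open containing the
identity coset, `χ : U → G` a continuous section of the quotient map, and
`F : U × S → X, F(u,s) = χ(u) • s` a homeomorphism onto an open neighborhood of `p`.
Then the map `φ : G × S → X, φ(g,s) = g • s` is an open map onto its image
`G • S = {g • s : g ∈ G, s ∈ S}` with the subspace topology. -/
theorem slice_saturation_map_isOpenMap
    (G X : Type*) [Group G] [TopologicalSpace G] [IsTopologicalGroup G]
    [TopologicalSpace X] [MulAction G X] [ContinuousSMul G X]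
    (p : X) (S : Set X) (hpS : p ∈ S)
    (hi : ∀ g ∈ MulAction.stabilizer G p, g • S ⊆ S)
    (hii : ∀ g : G, (g • S ∩ S).Nonempty → g ∈ MulAction.stabilizer G p)
    (U : Set (G ⧸ MulAction.stabilizer G p)) (hU : IsOpen U)
    (hUe : QuotientGroup.mk (1 : G) ∈ U)
    (χ : U → G) (hχ : Continuous χ)
    (hsec : ∀ u : U, QuotientGroup.mk (χ u) = (u : G ⧸ MulAction.stabilizer G p))
    (hF : IsOpenEmbedding (fun us : U × S => χ us.1 • (us.2 : X)))
    (hpF : p ∈ Set.range (fun us : U × S => χ us.1 • (us.2 : X))) :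
    IsOpenMap (fun w : G × S =>
      (⟨w.1 • (w.2 : X), ⟨w.1, w.2, w.2.2, rfl⟩⟩ :
        {x : X | ∃ g : G, ∃ s ∈ S, g • s = x})) := by
  intro W hW
  rw [isOpen_iff_forall_mem_open]
  rintro x ⟨⟨g₀, s₀⟩, hgsW, rfl⟩
  set e : U := ⟨QuotientGroup.mk 1, hUe⟩ with he
  set k : G := χ e with hk
  set η : U × S → G × S := fun us => (g₀ * k⁻¹ * χ us.1, us.2) with hη
  have hηcont : Continuous η :=
    (continuous_const.mul (hχ.comp continuous_fst)).prodMk continuous_snd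
  set Ω : Set (U × S) := η ⁻¹' W with hΩ
  have hΩopen : IsOpen Ω := hW.preimage hηcont
  set O : Set X := (g₀ * k⁻¹) • ((fun us : U × S => χ us.1 • (us.2 : X)) '' Ω) with hO
  have hOopen : IsOpen O := (hF.isOpenMap Ω hΩopen).smul _
  refine ⟨Subtype.val ⁻¹' O, ?_, hOopen.preimage continuous_subtype_val, ?_⟩
  · rintro z hz
    obtain ⟨y, ⟨⟨u, s⟩, husΩ, rfl⟩, hy⟩ := hz
    refine ⟨(g₀ * k⁻¹ * χ u, s), husΩ, ?_⟩
    apply Subtype.ext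
    simp only
    rw [← hy, mul_smul]
  · show _ ∈ O
    have hmem : (⟨e, s₀⟩ : U × S) ∈ Ω := by
      simp only [hΩ, hη, Set.mem_preimage, ← hk, inv_mul_cancel_right]
      exact hgsW
    refine ⟨k • (s₀ : X), ⟨⟨e, s₀⟩, hmem, rfl⟩, ?_⟩
    simp [smul_smul, mul_assoc]
end

section
/- Let a topological group G act continuously on a topological space X and let S ⊆ X be a slice through p ∈ X. Consider the action of the stabilizer G_p on G × S given by h ⋆ (g,s) = (g h, h⁻¹ • s) for h ∈ G_p, and let G ×_{G_p} S denote its orbit space with the quotient topology and π : G × S → G ×_{G_p} S the orbit projection. Then the map φ : G × S → X, φ(g,s) = g • s, descends to a map ψ : G ×_{G_p} S → X with ψ ∘ π = φ, and ψ is a homeomorphism from G ×_{G_p} S onto the set G • S = {g • s : g ∈ G, s ∈ S} equipped with the subspace topology. -/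
open Pointwise Topology

/-- `S` is a *slice* through `p` for a continuous action of a topological group `G` on `X`:
`p ∈ S`; (i) `g • S ⊆ S` for every `g` in the stabilizer `G_p`; (ii) if `(g • S) ∩ S ≠ ∅`
then `g ∈ G_p`; (iii) there are an open neighborhood `U` of the identity coset in `G ⧸ G_p`
and a continuous section `χ : U → G` of the quotient map such that
`F : U × S → X, F(u,s) = χ(u) • s` is a homeomorphism onto an open neighborhood of `p`. -/
def IsSlice (G : Type*) {X : Type*} [Group G] [TopologicalSpace G] [TopologicalSpace X]
    [MulAction G X] (p : X) (S : Set X) : Prop :=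
  p ∈ S ∧
  (∀ g ∈ MulAction.stabilizer G p, g • S ⊆ S) ∧
  (∀ g : G, (g • S ∩ S).Nonempty → g ∈ MulAction.stabilizer G p) ∧
  ∃ U : Set (G ⧸ MulAction.stabilizer G p), IsOpen U ∧ QuotientGroup.mk (1 : G) ∈ U ∧
    ∃ χ : U → G, Continuous χ ∧
      (∀ u : U, QuotientGroup.mk (χ u) = (u : G ⧸ MulAction.stabilizer G p)) ∧
      IsOpenEmbedding (fun us : U × S => χ us.1 • (us.2 : X)) ∧
      p ∈ Set.range (fun us : U × S => χ us.1 • (us.2 : X))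

/-- The orbit equivalence relation on `G × S` of the action of the stabilizer `G_p`
given by `h ⋆ (g, s) = (g * h, h⁻¹ • s)`. -/
def sliceSetoid (G : Type*) {X : Type*} [Group G] [MulAction G X] (p : X) (S : Set X) :
    Setoid (G × S) where
  r a b := ∃ h : G, h • p = p ∧ b.1 = a.1 * h ∧ (b.2 : X) = h⁻¹ • (a.2 : X)
  iseqv := by
    constructor
    · exact fun a => ⟨1, by simp, by simp, by simp⟩
    · rintro a b ⟨h, hp, h1, h2⟩
      refine ⟨h⁻¹, ?_, by rw [h1, mul_assoc, mul_inv_cancel, mul_one], by rw [h2]; simp⟩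
      conv_lhs => rw [← hp]
      simp
    · rintro a b c ⟨h, hp, h1, h2⟩ ⟨k, kp, k1, k2⟩
      refine ⟨h * k, ?_, by rw [k1, h1, mul_assoc], by rw [k2, h2, mul_inv_rev, mul_smul]⟩
      rw [mul_smul, kp, hp]

/-- Let `S` be a slice through `p` for a continuous action of a topological
group `G` on `X`.  Then the map `φ : G × S → X, φ(g,s) = g • s` descends to the twisted
quotient `G ×_{G_p} S` (with the quotient topology) and induces a homeomorphism
`ψ : G ×_{G_p} S ≃ₜ G • S`, where `G • S = {g • s : g ∈ G, s ∈ S}` carries the subspace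
topology and `ψ ∘ π = φ`. -/
theorem slice_tube_homeomorph
    (G X : Type*) [Group G] [TopologicalSpace G] [IsTopologicalGroup G]
    [TopologicalSpace X] [MulAction G X] [ContinuousSMul G X]
    (p : X) (S : Set X) (hS : IsSlice G p S) :
    ∃ ψ : Quotient (sliceSetoid G p S) ≃ₜ {x : X | ∃ g : G, ∃ s ∈ S, g • s = x},
      ∀ (g : G) (s : S),
        (ψ (Quotient.mk (sliceSetoid G p S) (g, s)) : X) = g • (s : X) := by
  obtain ⟨hpS, hstabS, hmin, U, hUo, hU1, χ, hχc, hχsec, hFemb, hpr⟩ := hS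
  set T : Set X := {x : X | ∃ g : G, ∃ s ∈ S, g • s = x} with hT
  set F : ↥U × ↥S → X := fun us => χ us.1 • (us.2 : X) with hF
  let f : G × S → T := fun gs => ⟨gs.1 • (gs.2 : X), gs.1, gs.2, gs.2.2, rfl⟩
  have hresp : ∀ a b : G × S, (sliceSetoid G p S).r a b → f a = f b := by
    rintro a b ⟨h, hp, h1, h2⟩
    apply Subtype.ext
    show a.1 • (a.2 : X) = b.1 • (b.2 : X)
    rw [h1, h2, mul_smul, smul_inv_smul]
  let ψ₀ : Quotient (sliceSetoid G p S) → T := Quotient.lift f hresp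
  have hψ₀c : Continuous ψ₀ :=
    Continuous.quotient_lift
      ((continuous_fst.smul (continuous_subtype_val.comp continuous_snd)).subtype_mk _) hresp
  have hinj : Function.Injective ψ₀ := by
    intro q₁ q₂ hq
    induction q₁ using Quotient.ind with | _ a =>
    induction q₂ using Quotient.ind with | _ b =>
    apply Quotient.sound
    have hval : a.1 • (a.2 : X) = b.1 • (b.2 : X) := congrArg Subtype.val hq
    have hb2 : (a.1⁻¹ * b.1) • (b.2 : X) = (a.2 : X) := by
      rw [mul_smul, ← hval, inv_smul_smul]
    refine ⟨a.1⁻¹ * b.1, ?_, by group, ?_⟩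
    · exact hmin _ ⟨(a.2 : X), ⟨(b.2 : X), b.2.2, hb2⟩, a.2.2⟩
    · rw [← hb2, inv_smul_smul]
  have hsurj : Function.Surjective ψ₀ := by
    rintro ⟨x, g, s, hs, hgs⟩
    exact ⟨Quotient.mk _ (g, ⟨s, hs⟩), Subtype.ext hgs⟩
  let e : Quotient (sliceSetoid G p S) ≃ T := Equiv.ofBijective ψ₀ ⟨hinj, hsurj⟩
  -- preliminaries for inverse continuity
  have hNE : Nonempty (↥U × ↥S) := ⟨⟨⟨_, hU1⟩, ⟨p, hpS⟩⟩⟩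
  have hFinj : Function.Injective F := hFemb.injective
  have hFinvOn : ContinuousOn (Function.invFun F) (Set.range F) := by
    rw [continuousOn_iff']
    intro t ht
    refine ⟨F '' t, hFemb.isOpenMap t ht, ?_⟩
    ext y
    constructor
    · rintro ⟨hyt, z, rfl⟩
      rw [Set.mem_preimage, Function.leftInverse_invFun hFinj z] at hyt
      exact ⟨⟨z, hyt, rfl⟩, z, rfl⟩
    · rintro ⟨⟨z, hz, rfl⟩, -⟩
      exact ⟨by rw [Set.mem_preimage, Function.leftInverse_invFun hFinj z]; exact hz, z, rfl⟩
  have hinv : Continuous (e.symm : T → Quotient (sliceSetoid G p S)) := by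
    rw [continuous_iff_continuousAt]
    rintro ⟨x, g, s, hs, hgs⟩
    set e₁ : ↥U := ⟨QuotientGroup.mk (1 : G), hU1⟩ with he₁
    set g' : G := g * (χ e₁)⁻¹ with hg'
    have hmemx : g'⁻¹ • x ∈ Set.range F := by
      refine ⟨(e₁, ⟨s, hs⟩), ?_⟩
      show χ e₁ • s = g'⁻¹ • x
      rw [← hgs, hg', mul_inv_rev, inv_inv, mul_smul, inv_smul_smul]
    set κ : X → Quotient (sliceSetoid G p S) := fun y =>
      Quotient.mk _ (g' * χ (Function.invFun F (g'⁻¹ • y)).1,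
        (Function.invFun F (g'⁻¹ • y)).2) with hκ
    have hκcont : ContinuousAt κ x := by
      have c0 : Continuous fun y : X => g'⁻¹ • y := continuous_const_smul _
      have c1 : ContinuousAt (Function.invFun F) (g'⁻¹ • x) :=
        hFinvOn.continuousAt (hFemb.isOpen_range.mem_nhds hmemx)
      have c2 : Continuous fun us : ↥U × ↥S =>
          Quotient.mk (sliceSetoid G p S) (g' * χ us.1, us.2) :=
        continuous_quotient_mk'.comp
          ((continuous_const.mul (hχc.comp continuous_fst)).prodMk continuous_snd)
      exact c2.continuousAt.comp (c1.comp c0.continuousAt)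
    have hVopen : IsOpen {y : X | g'⁻¹ • y ∈ Set.range F} :=
      hFemb.isOpen_range.preimage (continuous_const_smul _)
    have hcongr : (e.symm : T → Quotient (sliceSetoid G p S)) =ᶠ[𝓝 (⟨x, g, s, hs, hgs⟩ : T)]
        fun y : T => κ (y : X) := by
      have hmemV : (⟨x, g, s, hs, hgs⟩ : T) ∈ {y : T | g'⁻¹ • (y : X) ∈ Set.range F} := hmemx
      filter_upwards [(hVopen.preimage continuous_subtype_val).mem_nhds hmemV] with y hy
      have : ψ₀ (κ (y : X)) = y := by
        apply Subtype.ext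
        show (g' * χ (Function.invFun F (g'⁻¹ • (y:X))).1) • ((Function.invFun F (g'⁻¹ • (y:X))).2 : X) = (y : X)
        rw [mul_smul]
        change g' • F (Function.invFun F (g'⁻¹ • (y:X))) = (y : X)
        rw [Function.invFun_eq hy, smul_inv_smul]
      exact ((Equiv.symm_apply_eq e).mpr this.symm)
    exact (show ContinuousAt (fun y : T => κ (y : X)) ⟨x, g, s, hs, hgs⟩ from
      hκcont.comp (f := (Subtype.val : T → X)) (x := (⟨x, g, s, hs, hgs⟩ : T)) continuous_subtype_val.continuousAt).congr hcongr.symm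
  exact ⟨⟨e, hψ₀c, hinv⟩, fun g s => rfl⟩
end

section
/- Let a topological group G act continuously on a topological space X, let p ∈ X, and let S ⊆ X be a subset containing p satisfying slice property (ii) (if g ∈ G is such that (g • S) ∩ S ≠ ∅, then g ∈ G_p), together with a subset U ⊆ G/G_p and a section χ : U → G of the quotient map ρ : G → G/G_p. Let N = {χ(u) • s : u ∈ U, s ∈ S}. Then for every q ∈ N there exists f ∈ G such that f⁻¹ G_q f ⊆ G_p, i.e., f⁻¹ h f ∈ G_p for every h in the stabilizer G_q of q. -/
open Pointwise

/-- Let a topological group `G` act continuously on a topological space `X`,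
let `p ∈ S ⊆ X` satisfy slice property (ii), and let `χ : U → G` be a section of the
quotient map `ρ : G → G ⧸ G_p` on a subset `U ⊆ G ⧸ G_p`.  Let
`N = {χ(u) • s : u ∈ U, s ∈ S}`.  Then for every `q ∈ N` there exists `f ∈ G` with
`f⁻¹ G_q f ⊆ G_p`, i.e. `f⁻¹ * h * f ∈ G_p` for every `h` in the stabilizer of `q`. -/
theorem stabilizer_conjugate_into_of_slice
    (G X : Type*) [Group G] [TopologicalSpace G] [IsTopologicalGroup G]
    [TopologicalSpace X] [MulAction G X] [ContinuousSMul G X]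
    (p : X) (S : Set X) (hpS : p ∈ S)
    (hii : ∀ g : G, (g • S ∩ S).Nonempty → g ∈ MulAction.stabilizer G p)
    (U : Set (G ⧸ MulAction.stabilizer G p)) (χ : U → G)
    (hsec : ∀ u : U, QuotientGroup.mk (χ u) = (u : G ⧸ MulAction.stabilizer G p)) :
    ∀ q : X, (∃ u : U, ∃ s ∈ S, χ u • s = q) →
      ∃ f : G, ∀ h : G, h • q = q → (f⁻¹ * h * f) • p = p := by
  rintro q ⟨u, s, hs, rfl⟩
  refine ⟨χ u, fun h hh => ?_⟩
  have hg : ((χ u)⁻¹ * h * χ u) ∈ MulAction.stabilizer G p := by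
    apply hii
    refine ⟨s, ⟨s, hs, ?_⟩, hs⟩
    simp only [mul_smul, hh, inv_smul_smul]
  simpa using hg
end

section
/- Let a topological group G act continuously on a topological space X. Suppose that every point p ∈ X with trivial stabilizer G_p = {e} admits a slice S_p through p. Then the set {x ∈ X : G_x = {e}} of points with trivial stabilizer is open in X. -/
open Pointwise Topology

/-- Let a topological group `G` act continuously on a topological space
`X`.  If every point with trivial stabilizer admits a slice, then the set of points with
trivial stabilizer is open in `X`. -/
theorem isOpen_trivialStabilizer_of_slices
    (G X : Type*) [Group G] [TopologicalSpace G] [IsTopologicalGroup G]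
    [TopologicalSpace X] [MulAction G X] [ContinuousSMul G X]
    (hslice : ∀ p : X, (∀ g : G, g • p = p → g = 1) → ∃ S : Set X, IsSlice G p S) :
    IsOpen {x : X | ∀ g : G, g • x = x → g = 1} := by
  rw [isOpen_iff_forall_mem_open]
  intro p hp
  obtain ⟨S, hpS, _, hS2, U, _, _, χ, _, _, hemb, hpr⟩ := hslice p hp
  refine ⟨Set.range (fun us : U × S => χ us.1 • (us.2 : X)), ?_, hemb.isOpen_range, hpr⟩
  rintro x ⟨⟨u, s⟩, rfl⟩ g hg
  have key : ((χ u)⁻¹ * g * χ u) • (s : X) = s := by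
    simp only [mul_smul]
    rw [hg, inv_smul_smul]
  have hmem : (((χ u)⁻¹ * g * χ u) • S ∩ S).Nonempty :=
    ⟨(s : X), ⟨s, s.2, key⟩, s.2⟩
  have := hp _ (MulAction.mem_stabilizer_iff.mp (hS2 _ hmem))
  have h1 : (χ u)⁻¹ * g * χ u = 1 := this
  have : g = χ u * 1 * (χ u)⁻¹ := by
    rw [← h1]; group
  simpa using this
end
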